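/- The partial derivative of the quadratic-form term of the marginal log-likelihood with respect to a random-effect variance is minus the squared weighted correlation: let Z be a real n × q matrix with columns z₁, …, z_q, let Λ be a symmetric positive definite n × n real matrix, let ξ ∈ ℝⁿ, and define Ω(γ) = Z·Diag(γ)·Zᵀ + Λ for γ ∈ ℝ^q. Fix j ∈ {1, …, q} and γ ∈ ℝ^q at which Ω(γ) is invertible. Then the function t ↦ ξᵀ Ω(γ + (t − γ_j)e_j)^{-1} ξ, where e_j is the j-th standard basis vector, is differentiable at t = γ_j with derivative −(z_jᵀ Ω(γ)^{-1} ξ)². -/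

import Mathlib

open Matrix

attribute [local instance] Matrix.linftyOpNormedRing Matrix.linftyOpNormedAlgebra

/-- Auxiliary: differentiability of a matrix-valued curve passes to the quadratic form. -/
lemma aux_quad_deriv {n : ℕ} (ξ : Fin n → ℝ) {F : ℝ → Matrix (Fin n) (Fin n) ℝ}
    {F' : Matrix (Fin n) (Fin n) ℝ} {x : ℝ} (h : HasDerivAt F F' x) :
    HasDerivAt (fun t => ξ ⬝ᵥ (F t *ᵥ ξ)) (ξ ⬝ᵥ (F' *ᵥ ξ)) x := by
  let φlin : Matrix (Fin n) (Fin n) ℝ →ₗ[ℝ] ℝ :=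
    { toFun := fun N => ξ ⬝ᵥ (N *ᵥ ξ)
      map_add' := fun M N => by simp [Matrix.add_mulVec, dotProduct_add]
      map_smul' := fun c N => by simp [Matrix.smul_mulVec, dotProduct_smul] }
  let φ := φlin.toContinuousLinearMap
  have h2 := φ.hasFDerivAt.comp_hasDerivAt x h
  simp [φ, φlin] at h2
  exact h2

/-- The partial derivative of the quadratic-form term of the marginal log-likelihood
with respect to a random-effect variance is minus the squared weighted correlation:
with `Ω(γ) = Z·Diag(γ)·Zᵀ + Λ` invertible at `γ`, the function
`t ↦ ξᵀ Ω(γ + (t − γⱼ)eⱼ)⁻¹ ξ` is differentiable at `t = γⱼ` with derivative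
`−(zⱼᵀ Ω(γ)⁻¹ ξ)²`, where `zⱼ` is the `j`-th column of `Z`. -/
theorem deriv_quadratic_form_wrt_variance {n q : ℕ}
    (Z : Matrix (Fin n) (Fin q) ℝ)
    (Λ : Matrix (Fin n) (Fin n) ℝ) (hΛ : Λ.PosDef)
    (ξ : Fin n → ℝ) (j : Fin q) (γ : Fin q → ℝ)
    (hinv : IsUnit (Z * Matrix.diagonal γ * Zᵀ + Λ).det) :
    HasDerivAt
      (fun t : ℝ =>
        ξ ⬝ᵥ ((Z * Matrix.diagonal (γ + (t - γ j) • (Pi.single j 1 : Fin q → ℝ)) * Zᵀ + Λ)⁻¹ *ᵥ ξ))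
      (-(Zᵀ j ⬝ᵥ ((Z * Matrix.diagonal γ * Zᵀ + Λ)⁻¹ *ᵥ ξ)) ^ 2)
      (γ j) := by
  set A := Z * Matrix.diagonal γ * Zᵀ + Λ with hA
  set M := Z * Matrix.diagonal (Pi.single j 1 : Fin q → ℝ) * Zᵀ with hM
  -- the curve
  have hcurve : ∀ t : ℝ,
      Z * Matrix.diagonal (γ + (t - γ j) • (Pi.single j 1 : Fin q → ℝ)) * Zᵀ + Λ
        = A + (t - γ j) • M := by
    intro t
    have hd : Matrix.diagonal (γ + (t - γ j) • (Pi.single j 1 : Fin q → ℝ))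
        = Matrix.diagonal γ + (t - γ j) • Matrix.diagonal (Pi.single j 1 : Fin q → ℝ) := by
      ext a b
      by_cases h : a = b <;> simp [Matrix.diagonal_apply, h]
    rw [hd, hA, hM, Matrix.mul_add, Matrix.add_mul, Matrix.mul_smul, Matrix.smul_mul]
    abel
  have hAunit : IsUnit A := (Matrix.isUnit_iff_isUnit_det A).mpr hinv
  obtain ⟨u, hu⟩ := hAunit
  have hderivF : HasDerivAt (fun t : ℝ => A + (t - γ j) • M) M (γ j) := by
    have h1 : HasDerivAt (fun t : ℝ => t - γ j) 1 (γ j) :=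
      (hasDerivAt_id _).sub_const _
    have h2 := (h1.smul_const M).const_add A
    simp only [one_smul] at h2
    exact h2
  have hderivInv : HasDerivAt (fun t : ℝ => (A + (t - γ j) • M)⁻¹)
      (-(A⁻¹ * M * A⁻¹)) (γ j) := by
    have hbase : (↑u : Matrix (Fin n) (Fin n) ℝ) = A + (γ j - γ j) • M := by simp [hu]
    have hcomp := (hbase ▸ hasFDerivAt_ringInverse (𝕜 := ℝ) u).comp_hasDerivAt _ hderivF
    have hAi : (↑u⁻¹ : Matrix (Fin n) (Fin n) ℝ) = A⁻¹ := by
      rw [Matrix.nonsing_inv_eq_ringInverse, ← hu, Ring.inverse_unit]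
    simp [Function.comp_def, ← Matrix.nonsing_inv_eq_ringInverse, hAi,
      ContinuousLinearMap.mulLeftRight_apply, mul_assoc] at hcomp
    rw [mul_assoc]
    exact hcomp
  have hmain := aux_quad_deriv ξ hderivInv
  have hfun : (fun t : ℝ =>
      ξ ⬝ᵥ ((Z * Matrix.diagonal (γ + (t - γ j) • (Pi.single j 1 : Fin q → ℝ)) * Zᵀ + Λ)⁻¹ *ᵥ ξ))
      = fun t : ℝ => ξ ⬝ᵥ ((A + (t - γ j) • M)⁻¹ *ᵥ ξ) := by
    funext t; rw [hcurve t]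
  rw [hfun]
  -- now compute the derivative value
  convert hmain using 1
  -- A is symmetric
  have hAsymm : Aᵀ = A := by
    rw [hA]
    simp [Matrix.transpose_add, Matrix.transpose_mul, Matrix.diagonal_transpose,
      Matrix.mul_assoc]
    have h := hΛ.isHermitian
    simp at h
    exact h
  have hAinvsymm : A⁻¹ᵀ = A⁻¹ := by
    rw [Matrix.transpose_nonsing_inv, hAsymm]
  set z : Fin n → ℝ := Zᵀ j with hz
  have hMz : M = Matrix.vecMulVec z z := by
    ext i k
    simp [hM, hz, Matrix.mul_apply, Matrix.diagonal_apply, Pi.single_apply,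
      Matrix.vecMulVec_apply, Finset.sum_ite_eq, mul_comm]
  set w : Fin n → ℝ := A⁻¹ *ᵥ ξ with hw
  have key : ξ ⬝ᵥ ((A⁻¹ * M * A⁻¹) *ᵥ ξ) = (z ⬝ᵥ w) ^ 2 := by
    rw [← Matrix.mulVec_mulVec, ← Matrix.mulVec_mulVec, Matrix.dotProduct_mulVec,
      ← Matrix.mulVec_transpose, hAinvsymm]
    rw [hMz]
    have hMw : Matrix.vecMulVec z z *ᵥ w = (z ⬝ᵥ w) • z := by
      ext i
      simp only [Matrix.vecMulVec_apply, Matrix.mulVec, dotProduct, Pi.smul_apply,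
        smul_eq_mul, Finset.sum_mul]
      exact Finset.sum_congr rfl fun x _ => by ring
    rw [← hw, hMw]
    simp [dotProduct_smul, dotProduct_comm w z, sq, smul_eq_mul]
  rw [Matrix.neg_mulVec, dotProduct_neg, key]
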